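/- Let W₁, W₂, W₃ be convex open sets in ℝⁿ such that their triple intersection is nonempty and is equal to all pairwise intersections, i.e., W₁ ∩ W₂ ∩ W₃ ≠ ∅ and W₁ ∩ W₂ ∩ W₃ = Wᵢ ∩ Wⱼ for all 1 ≤ i < j ≤ 3. Then any affine line L in ℝⁿ that intersects each of W₁, W₂, and W₃ must intersect W₁ ∩ W₂ ∩ W₃. -/

import Mathlib

lemma aux_mid {E : Type*} [NormedAddCommGroup E] [NormedSpace ℝ E]
    (A B C : Set E) (hA : Convex ℝ A) (hB : Convex ℝ B) (hC : Convex ℝ C)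
    (hoA : IsOpen A) (hoB : IsOpen B) (hoC : IsOpen C)
    (q : E) (hqA : q ∈ A) (hqB : q ∈ B) (hqC : q ∈ C)
    (hAB : A ∩ B ⊆ C) (hBC : B ∩ C ⊆ A)
    (a b c : E) (ha : a ∈ A) (hb : b ∈ B) (hc : c ∈ C)
    (hseg : b ∈ segment ℝ a c) : b ∈ A := by
  obtain ⟨u, w, hu, hw, huw, hcomb⟩ := hseg
  set f : ℝ → E := fun s => (1 - s) • b + s • q with hf
  have hfc : Continuous f := by fun_prop
  have hfB : ∀ s ∈ Set.Icc (0:ℝ) 1, f s ∈ B := fun s hs =>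
    hB hb hqB (by linarith [hs.2]) hs.1 (by ring)
  set S : Set ℝ := {s | s ∈ Set.Icc (0:ℝ) 1 ∧ f s ∈ A} with hS
  have h1S : (1:ℝ) ∈ S := ⟨⟨by norm_num, le_refl 1⟩, by simp [hf, hqA]⟩
  have hSne : S.Nonempty := ⟨1, h1S⟩
  have hSbdd : BddBelow S := ⟨0, fun s hs => hs.1.1⟩
  set s₀ := sInf S with hs₀
  have hs₀0 : 0 ≤ s₀ := le_csInf hSne fun s hs => hs.1.1
  have hs₀1 : s₀ ≤ 1 := csInf_le hSbdd h1S
  set y := f s₀ with hy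
  have hyB : y ∈ B := hfB s₀ ⟨hs₀0, hs₀1⟩
  have hclS : s₀ ∈ closure S := csInf_mem_closure hSne hSbdd
  have hyclA : y ∈ closure A := by
    have : S ⊆ f ⁻¹' A := fun s hs => hs.2
    have h2 : s₀ ∈ closure (f ⁻¹' A) := closure_mono this hclS
    exact (hfc.closure_preimage_subset A) h2
  have hyclC : y ∈ closure C := by
    have : S ⊆ f ⁻¹' C := fun s hs => hAB ⟨hs.2, hfB s hs.1⟩
    have h2 : s₀ ∈ closure (f ⁻¹' C) := closure_mono this hclS
    exact (hfc.closure_preimage_subset C) h2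
  set a' := (1 - s₀) • a + s₀ • q with ha'
  set c' := (1 - s₀) • c + s₀ • q with hc'
  have ha'A : a' ∈ A := hA ha hqA (by linarith) hs₀0 (by ring)
  have hc'C : c' ∈ C := hC hc hqC (by linarith) hs₀0 (by ring)
  have hy' : y = u • a' + w • c' := by
    have : u • a' + w • c' = (1 - s₀) • (u • a + w • c) + ((u + w) * s₀) • q := by
      rw [ha', hc']; module
    rw [this, hcomb, huw, hy, hf]; simp
  -- main claim : y ∈ A
  have hyA : y ∈ A := by
    rcases eq_or_lt_of_le hu with hu0 | hu0
    · -- u = 0, w = 1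
      have hw1 : w = 1 := by linarith
      have : y = c' := by rw [hy', ← hu0, hw1]; simp
      exact hBC ⟨hyB, this ▸ hc'C⟩
    rcases eq_or_lt_of_le hw with hw0 | hw0
    · have hu1 : u = 1 := by linarith
      have : y = a' := by rw [hy', ← hw0, hu1]; simp
      exact this ▸ ha'A
    -- 0 < u, 0 < w
    have hzB : ∀ᶠ μ : ℝ in nhds 0, ((1-μ) • y + μ • a' ∈ B ∧ (1-μ) • y + μ • c' ∈ B) ∧ μ < 1 := by
      have c1 : Continuous fun μ : ℝ => (1-μ) • y + μ • a' := by fun_prop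
      have c2 : Continuous fun μ : ℝ => (1-μ) • y + μ • c' := by fun_prop
      have e1 : ∀ᶠ μ : ℝ in nhds 0, (1-μ) • y + μ • a' ∈ B := by
        have := c1.continuousAt (x := 0)
        have h0 : (1-(0:ℝ)) • y + (0:ℝ) • a' = y := by simp
        exact this.eventually_mem (by rw [h0]; exact hoB.mem_nhds hyB)
      have e2 : ∀ᶠ μ : ℝ in nhds 0, (1-μ) • y + μ • c' ∈ B := by
        have := c2.continuousAt (x := 0)
        have h0 : (1-(0:ℝ)) • y + (0:ℝ) • c' = y := by simp
        exact this.eventually_mem (by rw [h0]; exact hoB.mem_nhds hyB)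
      have e3 : ∀ᶠ μ : ℝ in nhds (0:ℝ), μ < 1 := eventually_lt_nhds (by norm_num)
      exact (e1.and e2).and e3
    have : ∀ᶠ μ : ℝ in nhdsWithin 0 (Set.Ioi 0),
        (((1-μ) • y + μ • a' ∈ B ∧ (1-μ) • y + μ • c' ∈ B) ∧ μ < 1) ∧ 0 < μ :=
      (hzB.filter_mono nhdsWithin_le_nhds).and self_mem_nhdsWithin
    obtain ⟨μ, ⟨⟨hzμB, hwμB⟩, hμ1⟩, hμ0⟩ := this.exists
    have hzA : μ • a' + (1-μ) • y ∈ interior A :=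
      hA.combo_interior_closure_mem_interior (by rwa [hoA.interior_eq]) hyclA hμ0
        (by linarith) (by ring)
    have hwC : μ • c' + (1-μ) • y ∈ interior C :=
      hC.combo_interior_closure_mem_interior (by rwa [hoC.interior_eq]) hyclC hμ0
        (by linarith) (by ring)
    have hzA' : (1-μ) • y + μ • a' ∈ A := by
      rw [add_comm]; exact interior_subset hzA
    have hwA' : (1-μ) • y + μ • c' ∈ A := by
      refine hBC ⟨hwμB, ?_⟩
      rw [add_comm]; exact interior_subset hwC
    have : u • ((1-μ) • y + μ • a') + w • ((1-μ) • y + μ • c') = y := by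
      have expand : u • ((1-μ) • y + μ • a') + w • ((1-μ) • y + μ • c')
          = ((u + w) * (1-μ)) • y + μ • (u • a' + w • c') := by module
      rw [expand, huw, ← hy']; module
    have hmem := hA hzA' hwA' hu hw huw
    rwa [this] at hmem
  -- conclude s₀ = 0
  rcases eq_or_lt_of_le hs₀0 with h0 | h0
  · have : b = y := by rw [hy, hf, ← h0]; simp
    rwa [this]
  · exfalso
    have hopenPre : IsOpen (f ⁻¹' A) := hoA.preimage hfc
    obtain ⟨ε, hε, hball⟩ := Metric.isOpen_iff.mp hopenPre s₀ hyA
    set s := max 0 (s₀ - ε/2) with hsdef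
    have hs_lt : s < s₀ := by
      apply max_lt h0; linarith
    have hs_mem : s ∈ Metric.ball s₀ ε := by
      rw [Real.ball_eq_Ioo]
      constructor
      · have : s₀ - ε/2 ≤ s := le_max_right _ _
        linarith
      · linarith
    have hsS : s ∈ S := ⟨⟨le_max_left _ _, by linarith⟩, hball hs_mem⟩
    exact absurd (csInf_le hSbdd hsS) (not_le.mpr hs_lt)

lemma seg_helper {E : Type*} [NormedAddCommGroup E] [NormedSpace ℝ E]
    (p v : E) (ta tm tc : ℝ) (h1 : ta ≤ tm) (h2 : tm ≤ tc) :
    p + tm • v ∈ segment ℝ (p + ta • v) (p + tc • v) := by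
  rcases eq_or_lt_of_le (h1.trans h2) with heq | hlt
  · have hta : ta = tm := le_antisymm h1 (by linarith)
    rw [← hta, heq]
    exact left_mem_segment ℝ _ _
  · have hden : (0:ℝ) < tc - ta := by linarith
    refine ⟨(tc - tm)/(tc - ta), (tm - ta)/(tc - ta), ?_, ?_, ?_, ?_⟩
    · exact div_nonneg (by linarith) hden.le
    · exact div_nonneg (by linarith) hden.le
    · rw [← add_div, show tc - tm + (tm - ta) = tc - ta by ring, div_self hden.ne']
    · have e1 : ((tc - tm)/(tc - ta)) • (p + ta • v) + ((tm - ta)/(tc - ta)) • (p + tc • v)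
          = ((tc - tm)/(tc - ta) + (tm - ta)/(tc - ta)) • p
            + ((tc - tm)/(tc - ta) * ta + (tm - ta)/(tc - ta) * tc) • v := by
        module
      rw [e1]
      have hden : (0:ℝ) < tc - ta := by linarith
      have h3 : (tc - tm)/(tc - ta) + (tm - ta)/(tc - ta) = 1 := by
        rw [← add_div, show tc - tm + (tm - ta) = tc - ta by ring, div_self hden.ne']
      have h4 : (tc - tm)/(tc - ta) * ta + (tm - ta)/(tc - ta) * tc = tm := by
        rw [div_mul_eq_mul_div, div_mul_eq_mul_div, ← add_div, div_eq_iff hden.ne']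
        ring
      rw [h3, h4, one_smul]

lemma aux_mid3 {E : Type*} [NormedAddCommGroup E] [NormedSpace ℝ E]
    (A B C : Set E) (hA : Convex ℝ A) (hB : Convex ℝ B) (hC : Convex ℝ C)
    (hoA : IsOpen A) (hoB : IsOpen B) (hoC : IsOpen C)
    (q : E) (hqA : q ∈ A) (hqB : q ∈ B) (hqC : q ∈ C)
    (hAB : A ∩ B ⊆ C) (hBC : B ∩ C ⊆ A)
    (a b c : E) (ha : a ∈ A) (hb : b ∈ B) (hc : c ∈ C)
    (hseg : b ∈ segment ℝ a c) : b ∈ A ∧ b ∈ B ∧ b ∈ C := by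
  have hbA := aux_mid A B C hA hB hC hoA hoB hoC q hqA hqB hqC hAB hBC a b c ha hb hc hseg
  exact ⟨hbA, hb, hAB ⟨hbA, hb⟩⟩

/-- **Lemma 3.2 (Lienkaemper–Shiu–Woodstock).**
Let `W₁, W₂, W₃` be convex open sets in `ℝⁿ` whose triple intersection is nonempty
and equals all pairwise intersections.  Then any line that intersects each of the
`Wᵢ`'s must intersect `W₁ ∩ W₂ ∩ W₃`. -/
theorem line_meets_triple_intersection
    (n : ℕ) (W₁ W₂ W₃ : Set (EuclideanSpace ℝ (Fin n)))
    (hconv₁ : Convex ℝ W₁) (hconv₂ : Convex ℝ W₂) (hconv₃ : Convex ℝ W₃)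
    (hopen₁ : IsOpen W₁) (hopen₂ : IsOpen W₂) (hopen₃ : IsOpen W₃)
    (hne : (W₁ ∩ W₂ ∩ W₃).Nonempty)
    (h12 : W₁ ∩ W₂ ∩ W₃ = W₁ ∩ W₂)
    (h13 : W₁ ∩ W₂ ∩ W₃ = W₁ ∩ W₃)
    (h23 : W₁ ∩ W₂ ∩ W₃ = W₂ ∩ W₃)
    (p v : EuclideanSpace ℝ (Fin n)) (hv : v ≠ 0)
    (L : Set (EuclideanSpace ℝ (Fin n)))
    (hL : L = {x | ∃ t : ℝ, x = p + t • v})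
    (hL₁ : (L ∩ W₁).Nonempty) (hL₂ : (L ∩ W₂).Nonempty) (hL₃ : (L ∩ W₃).Nonempty) :
    (L ∩ (W₁ ∩ W₂ ∩ W₃)).Nonempty := by
  obtain ⟨q, ⟨hq1, hq2⟩, hq3⟩ := hne
  have i12 : W₁ ∩ W₂ ⊆ W₃ := fun x hx => (h12.symm.subset hx).2
  have i13 : W₁ ∩ W₃ ⊆ W₂ := fun x hx => (h13.symm.subset hx).1.2
  have i23 : W₂ ∩ W₃ ⊆ W₁ := fun x hx => (h23.symm.subset hx).1.1
  obtain ⟨x₁, hx₁L, hx₁⟩ := hL₁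
  obtain ⟨x₂, hx₂L, hx₂⟩ := hL₂
  obtain ⟨x₃, hx₃L, hx₃⟩ := hL₃
  rw [hL] at hx₁L hx₂L hx₃L
  obtain ⟨t₁, rfl⟩ := hx₁L
  obtain ⟨t₂, rfl⟩ := hx₂L
  obtain ⟨t₃, rfl⟩ := hx₃L
  rcases le_total t₁ t₂ with ha | ha <;> rcases le_total t₂ t₃ with hb | hb <;>
    rcases le_total t₁ t₃ with hc | hc
  -- t₁ ≤ t₂ ≤ t₃ : middle 2
  · obtain ⟨m1, m2, m3⟩ := aux_mid3 W₁ W₂ W₃ hconv₁ hconv₂ hconv₃ hopen₁ hopen₂ hopen₃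
      q hq1 hq2 hq3 i12 i23 _ _ _ hx₁ hx₂ hx₃ (seg_helper p v t₁ t₂ t₃ ha hb)
    exact ⟨p + t₂ • v, by rw [hL]; exact ⟨t₂, rfl⟩, ⟨m1, m2⟩, m3⟩
  · obtain ⟨m1, m2, m3⟩ := aux_mid3 W₁ W₂ W₃ hconv₁ hconv₂ hconv₃ hopen₁ hopen₂ hopen₃
      q hq1 hq2 hq3 i12 i23 _ _ _ hx₁ hx₂ hx₃ (seg_helper p v t₁ t₂ t₃ ha hb)
    exact ⟨p + t₂ • v, by rw [hL]; exact ⟨t₂, rfl⟩, ⟨m1, m2⟩, m3⟩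
  -- t₁ ≤ t₂, t₃ ≤ t₂, t₁ ≤ t₃ : middle 3
  · obtain ⟨m1, m2, m3⟩ := aux_mid3 W₁ W₃ W₂ hconv₁ hconv₃ hconv₂ hopen₁ hopen₃ hopen₂
      q hq1 hq3 hq2 (fun x hx => i13 ⟨hx.1, hx.2⟩) (fun x hx => i23 ⟨hx.2, hx.1⟩)
      _ _ _ hx₁ hx₃ hx₂ (seg_helper p v t₁ t₃ t₂ hc hb)
    exact ⟨p + t₃ • v, by rw [hL]; exact ⟨t₃, rfl⟩, ⟨m1, m3⟩, m2⟩
  -- t₃ ≤ t₁ ≤ t₂ : middle 1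
  · obtain ⟨m1, m2, m3⟩ := aux_mid3 W₃ W₁ W₂ hconv₃ hconv₁ hconv₂ hopen₃ hopen₁ hopen₂
      q hq3 hq1 hq2 (fun x hx => i13 ⟨hx.2, hx.1⟩) (fun x hx => i12 ⟨hx.1, hx.2⟩)
      _ _ _ hx₃ hx₁ hx₂ (seg_helper p v t₃ t₁ t₂ hc ha)
    exact ⟨p + t₁ • v, by rw [hL]; exact ⟨t₁, rfl⟩, ⟨m2, m3⟩, m1⟩
  -- t₂ ≤ t₁, t₂ ≤ t₃, t₁ ≤ t₃ : middle 1
  · obtain ⟨m1, m2, m3⟩ := aux_mid3 W₂ W₁ W₃ hconv₂ hconv₁ hconv₃ hopen₂ hopen₁ hopen₃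
      q hq2 hq1 hq3 (fun x hx => i12 ⟨hx.2, hx.1⟩) (fun x hx => i13 ⟨hx.1, hx.2⟩)
      _ _ _ hx₂ hx₁ hx₃ (seg_helper p v t₂ t₁ t₃ ha hc)
    exact ⟨p + t₁ • v, by rw [hL]; exact ⟨t₁, rfl⟩, ⟨m2, m1⟩, m3⟩
  -- t₂ ≤ t₁, t₂ ≤ t₃, t₃ ≤ t₁ : middle 3
  · obtain ⟨m1, m2, m3⟩ := aux_mid3 W₂ W₃ W₁ hconv₂ hconv₃ hconv₁ hopen₂ hopen₃ hopen₁
      q hq2 hq3 hq1 (fun x hx => i23 ⟨hx.1, hx.2⟩) (fun x hx => i13 ⟨hx.2, hx.1⟩)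
      _ _ _ hx₂ hx₃ hx₁ (seg_helper p v t₂ t₃ t₁ hb hc)
    exact ⟨p + t₃ • v, by rw [hL]; exact ⟨t₃, rfl⟩, ⟨m3, m1⟩, m2⟩
  · obtain ⟨m1, m2, m3⟩ := aux_mid3 W₂ W₃ W₁ hconv₂ hconv₃ hconv₁ hopen₂ hopen₃ hopen₁
      q hq2 hq3 hq1 (fun x hx => i23 ⟨hx.1, hx.2⟩) (fun x hx => i13 ⟨hx.2, hx.1⟩)
      _ _ _ hx₂ hx₃ hx₁ (seg_helper p v t₂ t₃ t₁ (ha.trans hc) (hb.trans ha))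
    exact ⟨p + t₃ • v, by rw [hL]; exact ⟨t₃, rfl⟩, ⟨m3, m1⟩, m2⟩
  -- t₂ ≤ t₁, t₃ ≤ t₂ : middle 2
  · obtain ⟨m1, m2, m3⟩ := aux_mid3 W₃ W₂ W₁ hconv₃ hconv₂ hconv₁ hopen₃ hopen₂ hopen₁
      q hq3 hq2 hq1 (fun x hx => i23 ⟨hx.2, hx.1⟩) (fun x hx => i12 ⟨hx.2, hx.1⟩)
      _ _ _ hx₃ hx₂ hx₁ (seg_helper p v t₃ t₂ t₁ hb ha)
    exact ⟨p + t₂ • v, by rw [hL]; exact ⟨t₂, rfl⟩, ⟨m3, m2⟩, m1⟩
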